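/- Let E, A, X be categories, and let v : E ⥤ A and u : E ⥤ X be functors admitting left adjoints v_L ⊣ v and u_L ⊣ u. If the pairing functor ⟨v, u⟩ : E ⥤ A × X admits a left adjoint L, then for every object A of A and X of X the object L(A, X) is a binary coproduct of v_L(A) and u_L(X) in E, with coproduct injections induced by the unit of the adjunction L ⊣ ⟨v, u⟩. -/

import Mathlib

open CategoryTheory CategoryTheory.Limits

universe v₁ v₂ v₃ u₁ u₂ u₃

/-- Given functors `v : E ⥤ A` and `u : E ⥤ X` with left adjoints
`vL ⊣ v` and `uL ⊣ u`, if the pairing `⟨v, u⟩ : E ⥤ A × X` admits a left adjoint `L`,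
then for all objects `a : A`, `x : X` the object `L.obj (a, x)` is a binary coproduct of
`vL(a)` and `uL(x)`, the coproduct injections being induced by the unit of `L ⊣ ⟨v, u⟩`. -/
theorem left_adjoint_of_pairing_is_coproduct
    {E : Type u₁} [Category.{v₁} E] {A : Type u₂} [Category.{v₂} A]
    {X : Type u₃} [Category.{v₃} X]
    (v : E ⥤ A) (u : E ⥤ X) (vL : A ⥤ E) (uL : X ⥤ E)
    (adjV : vL ⊣ v) (adjU : uL ⊣ u)
    (L : A × X ⥤ E) (adj : L ⊣ Functor.prod' v u) (a : A) (x : X) :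
    Nonempty (IsColimit (BinaryCofan.mk
      ((adjV.homEquiv a (L.obj (a, x))).symm (adj.unit.app (a, x)).1)
      ((adjU.homEquiv x (L.obj (a, x))).symm (adj.unit.app (a, x)).2))) := by
  refine ⟨BinaryCofan.IsColimit.mk _
    (fun {T} f g => (adj.homEquiv (a, x) T).symm (adjV.homEquiv a T f, adjU.homEquiv x T g))
    ?_ ?_ ?_⟩
  · intro T f g
    apply (adjV.homEquiv a T).injective
    erw [Adjunction.homEquiv_naturality_right]
    erw [Equiv.apply_symm_apply]
    have h := congrArg Prod.fst
      ((adj.homEquiv (a, x) T).apply_symm_apply (adjV.homEquiv a T f, adjU.homEquiv x T g))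
    rw [Adjunction.homEquiv_unit] at h
    exact h
  · intro T f g
    apply (adjU.homEquiv x T).injective
    erw [Adjunction.homEquiv_naturality_right]
    erw [Equiv.apply_symm_apply]
    have h := congrArg Prod.snd
      ((adj.homEquiv (a, x) T).apply_symm_apply (adjV.homEquiv a T f, adjU.homEquiv x T g))
    rw [Adjunction.homEquiv_unit] at h
    exact h
  · intro T f g m hf hg
    apply (adj.homEquiv (a, x) T).injective
    rw [Equiv.apply_symm_apply]
    subst hf hg
    erw [Adjunction.homEquiv_unit]
    symm
    ext
    · show adjV.homEquiv a T (_ ≫ m) = (adj.unit.app (a, x)).1 ≫ v.map m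
      erw [Adjunction.homEquiv_naturality_right]
      erw [Equiv.apply_symm_apply]
      rfl
    · show adjU.homEquiv x T (_ ≫ m) = (adj.unit.app (a, x)).2 ≫ u.map m
      erw [Adjunction.homEquiv_naturality_right]
      erw [Equiv.apply_symm_apply]
      rfl
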